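/- Let X₀ ⊂ (−1/2, 1/2) be finite with min(X₀) + max(X₀) = 0, and X ⊂ Z finite. Then the Minkowski sums X₀ ⊕ X and (−X₀) ⊕ X are homometric subsets of ℝ: the multisets of pairwise distances coincide. -/

import Mathlib

open Finset

/-- The multiset of pairwise distances over pairs `x < y` of a finite subset
of `ℝ`. -/
noncomputable def distMultiset (S : Finset ℝ) : Multiset ℝ :=
  ((S ×ˢ S).filter fun p => p.1 < p.2).val.map fun p => p.2 - p.1

/-- The Minkowski sum `X₀ ⊕ X` of a finite set of reals and a finite set of
integers. -/
noncomputable def minkSum (X₀ : Finset ℝ) (X : Finset ℤ) : Finset ℝ :=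
  (X₀ ×ˢ X).image fun p => p.1 + (p.2 : ℝ)

private lemma mem_minkSum' {X₀ : Finset ℝ} {X : Finset ℤ} {x : ℝ} :
    x ∈ minkSum X₀ X ↔ ∃ a ∈ X₀, ∃ m ∈ X, a + (m : ℝ) = x := by
  simp only [minkSum, Finset.mem_image, Finset.mem_product, Prod.exists]
  constructor
  · rintro ⟨a, m, ⟨ha, hm⟩, h⟩; exact ⟨a, ha, m, hm, h⟩
  · rintro ⟨a, ha, m, hm, h⟩; exact ⟨a, m, ⟨ha, hm⟩, h⟩

private lemma round_help' {a : ℝ} (h1 : -(1 / 2 : ℝ) < a) (h2 : a < 1 / 2) (m : ℤ) :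
    round (a + (m : ℝ)) = m := by
  rw [round_add_intCast, round_eq_zero_iff.2 ⟨h1.le, h2⟩, zero_add]

/-- If `X₀ ⊂ (−1/2, 1/2)` satisfies `min X₀ + max X₀ = 0` and `X ⊂ ℤ`, then the
Minkowski sums `X₀ ⊕ X` and `(−X₀) ⊕ X` are homometric. -/
theorem minkowski_sums_homometric (X₀ : Finset ℝ) (X : Finset ℤ)
    (h₀ : X₀.Nonempty)
    (hball : ∀ a ∈ X₀, -(1 / 2 : ℝ) < a ∧ a < 1 / 2)
    (hsym : X₀.min' h₀ + X₀.max' h₀ = 0) :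
    distMultiset (minkSum X₀ X) = distMultiset (minkSum (X₀.image (fun a => -a)) X) := by
  classical
  set Y : Finset ℝ := X₀.image (fun a => -a) with hY
  set S₁ : Finset ℝ := minkSum X₀ X with hS₁
  set S₂ : Finset ℝ := minkSum Y X with hS₂
  set E : ℝ × ℝ → ℝ × ℝ := fun p =>
    (((round p.1 + round p.2 : ℤ) : ℝ) - p.2, ((round p.1 + round p.2 : ℤ) : ℝ) - p.1)
    with hE
  set P₁ : Finset (ℝ × ℝ) := (S₁ ×ˢ S₁).filter fun p => p.1 < p.2 with hP₁
  set P₂ : Finset (ℝ × ℝ) := (S₂ ×ˢ S₂).filter fun p => p.1 < p.2 with hP₂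
  -- E maps P₁ into P₂ and is an involution on P₁
  have hfwd : ∀ p ∈ P₁, E p ∈ P₂ ∧ E (E p) = p := by
    intro p hp
    rw [hP₁, Finset.mem_filter, Finset.mem_product] at hp
    obtain ⟨⟨hp1, hp2⟩, hlt⟩ := hp
    obtain ⟨a, ha, m, hm, h1⟩ := mem_minkSum'.1 hp1
    obtain ⟨b, hb, n, hn, h2⟩ := mem_minkSum'.1 hp2
    obtain ⟨ha1, ha2⟩ := hball a ha
    obtain ⟨hb1, hb2⟩ := hball b hb
    have r1 : round p.1 = m := by rw [← h1]; exact round_help' ha1 ha2 m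
    have r2 : round p.2 = n := by rw [← h2]; exact round_help' hb1 hb2 n
    have e1 : (E p).1 = -b + (m : ℝ) := by
      simp only [hE]; rw [r1, r2, ← h2]; push_cast; ring
    have e2 : (E p).2 = -a + (n : ℝ) := by
      simp only [hE]; rw [r1, r2, ← h1]; push_cast; ring
    have hmem1 : (E p).1 ∈ S₂ := by
      rw [e1]; exact mem_minkSum'.2 ⟨-b, Finset.mem_image_of_mem _ hb, m, hm, rfl⟩
    have hmem2 : (E p).2 ∈ S₂ := by
      rw [e2]; exact mem_minkSum'.2 ⟨-a, Finset.mem_image_of_mem _ ha, n, hn, rfl⟩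
    have hltE : (E p).1 < (E p).2 := by
      rw [e1, e2]; rw [← h1, ← h2] at hlt; push_cast at hlt ⊢; linarith
    refine ⟨Finset.mem_filter.2 ⟨Finset.mem_product.2 ⟨hmem1, hmem2⟩, hltE⟩, ?_⟩
    have rE1 : round (E p).1 = m := by
      rw [e1]; exact round_help' (by linarith) (by linarith) m
    have rE2 : round (E p).2 = n := by
      rw [e2]; exact round_help' (by linarith) (by linarith) n
    have hEE : E (E p) = (((m + n : ℤ) : ℝ) - (E p).2, ((m + n : ℤ) : ℝ) - (E p).1) := by
      show (((round (E p).1 + round (E p).2 : ℤ) : ℝ) - (E p).2, ((round (E p).1 + round (E p).2 : ℤ) : ℝ) - (E p).1) = _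
      rw [rE1, rE2]
    have hpp : p = (p.1, p.2) := rfl
    rw [hEE, e1, e2, hpp, ← h1, ← h2]
    simp only [Prod.mk.injEq]
    constructor <;> (push_cast; ring)
  -- E maps P₂ into P₁ and is an involution on P₂
  have hbwd : ∀ p ∈ P₂, E p ∈ P₁ ∧ E (E p) = p := by
    intro p hp
    rw [hP₂, Finset.mem_filter, Finset.mem_product] at hp
    obtain ⟨⟨hp1, hp2⟩, hlt⟩ := hp
    obtain ⟨c, hc, m, hm, h1⟩ := mem_minkSum'.1 hp1
    obtain ⟨d, hd, n, hn, h2⟩ := mem_minkSum'.1 hp2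
    obtain ⟨c', hc', rfl⟩ := Finset.mem_image.1 hc
    obtain ⟨d', hd', rfl⟩ := Finset.mem_image.1 hd
    obtain ⟨hc1, hc2⟩ := hball c' hc'
    obtain ⟨hd1, hd2⟩ := hball d' hd'
    have r1 : round p.1 = m := by rw [← h1]; exact round_help' (by linarith) (by linarith) m
    have r2 : round p.2 = n := by rw [← h2]; exact round_help' (by linarith) (by linarith) n
    have e1 : (E p).1 = d' + (m : ℝ) := by
      simp only [hE]; rw [r1, r2, ← h2]; push_cast; ring
    have e2 : (E p).2 = c' + (n : ℝ) := by
      simp only [hE]; rw [r1, r2, ← h1]; push_cast; ring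
    have hmem1 : (E p).1 ∈ S₁ := by
      rw [e1]; exact mem_minkSum'.2 ⟨d', hd', m, hm, rfl⟩
    have hmem2 : (E p).2 ∈ S₁ := by
      rw [e2]; exact mem_minkSum'.2 ⟨c', hc', n, hn, rfl⟩
    have hltE : (E p).1 < (E p).2 := by
      rw [e1, e2]; rw [← h1, ← h2] at hlt; push_cast at hlt ⊢; linarith
    refine ⟨Finset.mem_filter.2 ⟨Finset.mem_product.2 ⟨hmem1, hmem2⟩, hltE⟩, ?_⟩
    have rE1 : round (E p).1 = m := by
      rw [e1]; exact round_help' hd1 hd2 m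
    have rE2 : round (E p).2 = n := by
      rw [e2]; exact round_help' hc1 hc2 n
    have hEE : E (E p) = (((m + n : ℤ) : ℝ) - (E p).2, ((m + n : ℤ) : ℝ) - (E p).1) := by
      show (((round (E p).1 + round (E p).2 : ℤ) : ℝ) - (E p).2, ((round (E p).1 + round (E p).2 : ℤ) : ℝ) - (E p).1) = _
      rw [rE1, rE2]
    have hpp : p = (p.1, p.2) := rfl
    rw [hEE, e1, e2, hpp, ← h1, ← h2]
    simp only [Prod.mk.injEq]
    constructor <;> (push_cast; ring)
  have key : P₂ = P₁.image E := by
    apply Finset.Subset.antisymm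
    · intro p hp
      exact Finset.mem_image.2 ⟨E p, (hbwd p hp).1, (hbwd p hp).2⟩
    · intro q hq
      obtain ⟨p, hp, rfl⟩ := Finset.mem_image.1 hq
      exact (hfwd p hp).1
  have hinj : Set.InjOn E ↑P₁ := by
    intro p hp q hq h
    rw [← (hfwd p hp).2, ← (hfwd q hq).2, h]
  unfold distMultiset
  rw [← hP₁, ← hP₂, key, Finset.image_val_of_injOn hinj, Multiset.map_map]
  congr 1
  funext p
  show p.2 - p.1 = (E p).2 - (E p).1
  simp only [hE]; ring
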